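/- Let $G_{a,M}$ be the noncentral $\chi^2_1(M^2/a)$ CDF and define $\tilde H_{a,M}(v)=G_{a,M}^{-1}(1-e^{-v})$ for $v>0$. Then the second derivative satisfies the identity $\tilde H_{a,M}''(v)=B_{a,M}(v)-(\tilde H_{a,M}'(v))^2 J_{a,M}(v)$, where $B_{a,M}(v)=-\tilde H_{a,M}'(v)+(\tilde H_{a,M}'(v))^2\big(\tfrac12+\tfrac{1}{2\tilde H_{a,M}(v)}\big)$ and $J_{a,M}(v)=\frac{\sum_{k=1}^\infty (M^2/a)^k(\tilde H_{a,M}(v))^{k-1}/(2^{2k}(k-1)!\,\Gamma(k+1/2))}{\sum_{k=0}^\infty (M^2/a)^k(\tilde H_{a,M}(v))^{k}/(2^{2k}k!\,\Gamma(k+1/2))}$; moreover $J_{a,M}(v)\le M^2/(2a)$ for all $v>0$. -/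

import Mathlib

open MeasureTheory ProbabilityTheory Filter Real Set
open scoped ENNReal NNReal Topology

/-- The noncentral chi-squared distribution with 1 degree of freedom and noncentrality
`M²/a`: the law of `(Z + M/√a)²` for `Z ∼ N(0,1)`. -/
noncomputable def ncChiSq (a : ℕ) (M : ℝ) : Measure ℝ :=
  Measure.map (fun z => (z + M / Real.sqrt a) ^ 2) (gaussianReal 0 1)

/-- The CDF of the noncentral χ²₁(M²/a) distribution. -/
noncomputable def ncCDF (a : ℕ) (M y : ℝ) : ℝ := ((ncChiSq a M) (Set.Iic y)).toReal

/-- The function `J_{a,M}(x)` (with `x = H̃_{a,M}(v)`): ratio of the two series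
`∑_{k≥1} (M²/a)^k x^{k-1}/(2^{2k}(k-1)!Γ(k+1/2))` and
`∑_{k≥0} (M²/a)^k x^k/(2^{2k}k!Γ(k+1/2))` (the first sum reindexed by `k ↦ k+1`). -/
noncomputable def Jfun (a : ℕ) (M x : ℝ) : ℝ :=
  (∑' k : ℕ, (M ^ 2 / a) ^ (k + 1) * x ^ k /
      (2 ^ (2 * (k + 1)) * Nat.factorial k * Real.Gamma ((k : ℝ) + 1 + 1 / 2))) /
  (∑' k : ℕ, (M ^ 2 / a) ^ k * x ^ k /
      (2 ^ (2 * k) * Nat.factorial k * Real.Gamma ((k : ℝ) + 1 / 2)))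

/-! ### Auxiliary lemmas -/

lemma Gamma_nat_half (k : ℕ) :
    Real.Gamma ((k:ℝ) + 1/2) = Real.sqrt π * (2*k).factorial / (4^k * k.factorial) := by
  induction k with
  | zero =>
    simp only [Nat.cast_zero, zero_add, mul_zero, Nat.factorial_zero, pow_zero]
    rw [Real.Gamma_one_half_eq]; simp
  | succ n ih =>
    push_cast
    rw [show ((n:ℝ)+1) + 1/2 = ((n:ℝ) + 1/2) + 1 by ring,
      Real.Gamma_add_one (by positivity), ih]
    have h1 : (2*(n+1)).factorial = (2*n+2) * ((2*n+1) * (2*n).factorial) := by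
      rw [show 2*(n+1) = (2*n+1)+1 by ring, Nat.factorial_succ, Nat.factorial_succ]
    rw [h1, Nat.factorial_succ n]
    push_cast
    have h4 : (0:ℝ) < 4^n := by positivity
    have hf : (0:ℝ) < (n.factorial : ℝ) := by exact_mod_cast n.factorial_pos
    field_simp
    ring

lemma sinh_le_mul_cosh {t : ℝ} (ht : 0 ≤ t) : Real.sinh t ≤ t * Real.cosh t := by
  have h1 := Real.hasSum_sinh t
  have h2 := (Real.hasSum_cosh t).mul_left t
  refine h1.tsum_eq ▸ h2.tsum_eq ▸ Summable.tsum_le_tsum (fun n => ?_) h1.summable h2.summable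
  have hfle : ((2*n).factorial : ℝ) ≤ ((2*n+1).factorial : ℝ) := by
    exact_mod_cast Nat.factorial_le (by omega)
  have h0 : (0:ℝ) < ((2*n).factorial : ℝ) := by exact_mod_cast (2*n).factorial_pos
  calc t ^ (2*n+1) / ((2*n+1).factorial : ℝ)
      ≤ t ^ (2*n+1) / ((2*n).factorial : ℝ) :=
        div_le_div_of_nonneg_left (pow_nonneg ht _) h0 hfle
    _ = t * (t ^ (2*n) / ((2*n).factorial : ℝ)) := by rw [pow_succ]; ring

lemma S0_eq {c x : ℝ} (hx : 0 ≤ x) :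
    (∑' k : ℕ, (c^2) ^ k * x ^ k / (2 ^ (2*k) * k.factorial * Real.Gamma ((k:ℝ) + 1/2)))
      = Real.cosh (c * Real.sqrt x) / Real.sqrt π := by
  have key : ∀ k : ℕ, (c^2) ^ k * x ^ k / (2 ^ (2*k) * k.factorial * Real.Gamma ((k:ℝ) + 1/2))
      = (Real.sqrt π)⁻¹ * ((c * Real.sqrt x) ^ (2*k) / ((2*k).factorial : ℝ)) := by
    intro k
    rw [Gamma_nat_half]
    have hnum : (c * Real.sqrt x) ^ (2*k) = (c^2)^k * x^k := by
      rw [mul_pow, pow_mul, pow_mul, Real.sq_sqrt hx]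
    have h2 : (2:ℝ)^(2*k) = 4^k := by rw [pow_mul]; norm_num
    have hπ : (0:ℝ) < Real.sqrt π := Real.sqrt_pos.mpr Real.pi_pos
    have hf : (0:ℝ) < (k.factorial : ℝ) := by exact_mod_cast k.factorial_pos
    have hf2 : (0:ℝ) < ((2*k).factorial : ℝ) := by exact_mod_cast (2*k).factorial_pos
    rw [hnum, h2]
    field_simp
  rw [tsum_congr key, tsum_mul_left, (Real.hasSum_cosh _).tsum_eq, inv_mul_eq_div]

lemma S1_eq {c x : ℝ} (hx : 0 < x) :
    (∑' k : ℕ, (c^2) ^ (k+1) * x ^ k / (2 ^ (2*(k+1)) * k.factorial * Real.Gamma ((k:ℝ) + 1 + 1/2)))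
      = c * Real.sinh (c * Real.sqrt x) / (2 * Real.sqrt π * Real.sqrt x) := by
  have hsx : (0:ℝ) < Real.sqrt x := Real.sqrt_pos.mpr hx
  have key : ∀ k : ℕ, (c^2) ^ (k+1) * x ^ k / (2 ^ (2*(k+1)) * k.factorial * Real.Gamma ((k:ℝ) + 1 + 1/2))
      = (c / (2 * Real.sqrt π * Real.sqrt x)) * ((c * Real.sqrt x) ^ (2*k+1) / ((2*k+1).factorial : ℝ)) := by
    intro k
    have hcast : ((k:ℝ) + 1 + 1/2) = (((k+1 : ℕ)):ℝ) + 1/2 := by push_cast; ring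
    rw [hcast, Gamma_nat_half]
    have hnum : (c * Real.sqrt x) ^ (2*k+1) = (c^2)^k * x^k * (c * Real.sqrt x) := by
      rw [pow_succ, mul_pow, pow_mul, pow_mul, Real.sq_sqrt hx.le]
    have h2 : (2:ℝ)^(2*(k+1)) = 4^(k+1) := by rw [pow_mul]; norm_num
    have hfs : ((2*(k+1)).factorial : ℝ) = (2*(k:ℝ)+2) * ((2*k+1).factorial : ℝ) := by
      rw [show 2*(k+1) = (2*k+1)+1 by ring, Nat.factorial_succ]; push_cast; ring
    have hπ : (0:ℝ) < Real.sqrt π := Real.sqrt_pos.mpr Real.pi_pos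
    have hf : (0:ℝ) < (k.factorial : ℝ) := by exact_mod_cast k.factorial_pos
    have hf2 : (0:ℝ) < ((2*k+1).factorial : ℝ) := by exact_mod_cast (2*k+1).factorial_pos
    have hfs1 : ((k+1).factorial : ℝ) = ((k:ℝ)+1) * (k.factorial : ℝ) := by
      rw [Nat.factorial_succ]; push_cast; ring
    rw [hnum, h2, hfs, hfs1, pow_succ (c^2)]
    have h4 : (0:ℝ) < 4^(k+1) := by positivity
    field_simp
  rw [tsum_congr key, tsum_mul_left, (Real.hasSum_sinh _).tsum_eq]
  field_simp

lemma Jfun_eq {a : ℕ} (ha : 1 ≤ a) {M : ℝ} (hM : 0 ≤ M) {x : ℝ} (hx : 0 < x) :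
    Jfun a M x = (M / Real.sqrt a) * Real.sinh ((M / Real.sqrt a) * Real.sqrt x)
      / (2 * Real.sqrt x * Real.cosh ((M / Real.sqrt a) * Real.sqrt x)) := by
  have hapos : (0:ℝ) < a := by exact_mod_cast ha
  set c : ℝ := M / Real.sqrt a with hc
  have hc2 : M ^ 2 / a = c ^ 2 := by
    rw [hc, div_pow, Real.sq_sqrt hapos.le]
  have hsx : (0:ℝ) < Real.sqrt x := Real.sqrt_pos.mpr hx
  have hπ : (0:ℝ) < Real.sqrt π := Real.sqrt_pos.mpr Real.pi_pos
  have hcosh : (0:ℝ) < Real.cosh (c * Real.sqrt x) := Real.cosh_pos _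
  unfold Jfun
  simp_rw [hc2]
  rw [S1_eq hx, S0_eq hx.le]
  field_simp

lemma Jfun_le {a : ℕ} (ha : 1 ≤ a) {M : ℝ} (hM : 0 ≤ M) {x : ℝ} (hx : 0 < x) :
    Jfun a M x ≤ M ^ 2 / (2 * a) := by
  have hapos : (0:ℝ) < a := by exact_mod_cast ha
  have hsa : (0:ℝ) < Real.sqrt a := Real.sqrt_pos.mpr hapos
  set c : ℝ := M / Real.sqrt a with hc
  have hcpos : 0 ≤ c := div_nonneg hM hsa.le
  have hsx : (0:ℝ) < Real.sqrt x := Real.sqrt_pos.mpr hx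
  have hcosh : (0:ℝ) < Real.cosh (c * Real.sqrt x) := Real.cosh_pos _
  rw [Jfun_eq ha hM hx, ← hc]
  have hb : c * Real.sinh (c * Real.sqrt x) ≤ c^2 * Real.sqrt x * Real.cosh (c * Real.sqrt x) := by
    calc c * Real.sinh (c * Real.sqrt x)
        ≤ c * ((c * Real.sqrt x) * Real.cosh (c * Real.sqrt x)) :=
          mul_le_mul_of_nonneg_left (sinh_le_mul_cosh (by positivity)) hcpos
      _ = c^2 * Real.sqrt x * Real.cosh (c * Real.sqrt x) := by ring
  have hM2 : M ^ 2 / (2 * a) = c^2 / 2 := by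
    rw [hc, div_pow, Real.sq_sqrt hapos.le, div_div, mul_comm]
  rw [hM2, div_le_div_iff₀ (by positivity) (by norm_num)]
  calc c * Real.sinh (c * Real.sqrt x) * 2
      ≤ (c^2 * Real.sqrt x * Real.cosh (c * Real.sqrt x)) * 2 := by linarith
    _ = c^2 * (2 * Real.sqrt x * Real.cosh (c * Real.sqrt x)) := by ring

/-! ### Gaussian CDF -/

noncomputable def phi (y : ℝ) : ℝ := (Real.sqrt (2 * π))⁻¹ * Real.exp (-y^2/2)
noncomputable def Phi (y : ℝ) : ℝ := ((gaussianReal 0 1) (Iic y)).toReal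

lemma phi_eq_pdf : gaussianPDFReal 0 1 = phi := by
  ext x
  simp [gaussianPDFReal, phi]

lemma phi_integrable : MeasureTheory.Integrable phi := by
  rw [← phi_eq_pdf]; exact ProbabilityTheory.integrable_gaussianPDFReal 0 1

lemma phi_continuous : Continuous phi := by
  unfold phi; continuity

lemma Phi_eq (y : ℝ) : Phi y = ∫ t in Iic y, phi t := by
  rw [Phi, gaussianReal_apply_eq_integral 0 one_ne_zero, phi_eq_pdf,
    ENNReal.toReal_ofReal]
  exact integral_nonneg (fun t => by unfold phi; positivity)

lemma Phi_hasDeriv (y : ℝ) : HasDerivAt Phi (phi y) y := by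
  have key : ∀ z, Phi z = Phi 0 + ∫ t in (0:ℝ)..z, phi t := by
    intro z
    rw [Phi_eq, Phi_eq, ← intervalIntegral.integral_Iic_sub_Iic
      (phi_integrable.integrableOn) (phi_integrable.integrableOn)]
    ring
  have h1 : HasDerivAt (fun z => Phi 0 + ∫ t in (0:ℝ)..z, phi t) (phi y) y := by
    refine HasDerivAt.const_add _ ?_
    exact intervalIntegral.integral_hasDerivAt_right
      phi_integrable.intervalIntegrable
      phi_continuous.aestronglyMeasurable.stronglyMeasurableAtFilter
      phi_continuous.continuousAt
  exact h1.congr_of_eventuallyEq (Filter.Eventually.of_forall key)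

lemma Phi_strictMono : StrictMono Phi := by
  apply strictMono_of_deriv_pos
  intro y
  rw [(Phi_hasDeriv y).deriv]
  unfold phi
  positivity

lemma Phi_nonneg (y : ℝ) : 0 ≤ Phi y := ENNReal.toReal_nonneg

lemma Phi_lt_one (y : ℝ) : Phi y < 1 := by
  have hne : (gaussianReal 0 1) (Iic y) ≠ 1 := by
    intro h
    have hc : (gaussianReal 0 1) (Iic y)ᶜ = 0 := by
      rw [measure_compl measurableSet_Iic (measure_ne_top _ _), h, measure_univ, tsub_self]
    rw [compl_Iic] at hc
    have := gaussianReal_absolutelyContinuous' 0 one_ne_zero hc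
    rw [Real.volume_Ioi] at this
    exact ENNReal.top_ne_zero this
  have hle : (gaussianReal 0 1) (Iic y) ≤ 1 := prob_le_one
  have hlt : (gaussianReal 0 1) (Iic y) < 1 := lt_of_le_of_ne hle hne
  rw [Phi, show (1:ℝ) = (1:ℝ≥0∞).toReal by simp]
  exact ENNReal.toReal_strict_mono ENNReal.one_ne_top hlt

lemma F_strictMonoOn (c : ℝ) :
    StrictMonoOn (fun y => Phi (Real.sqrt y - c) - Phi (-Real.sqrt y - c)) (Ici (0:ℝ)) := by
  intro y1 h1 y2 h2 h12
  have hs : Real.sqrt y1 < Real.sqrt y2 := Real.sqrt_lt_sqrt h1 h12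
  have ha : Phi (Real.sqrt y1 - c) < Phi (Real.sqrt y2 - c) := Phi_strictMono (by linarith)
  have hb : Phi (-Real.sqrt y2 - c) < Phi (-Real.sqrt y1 - c) := Phi_strictMono (by linarith)
  simp only
  linarith

lemma gauss_null_singleton (t : ℝ) : (gaussianReal 0 1) {t} = 0 :=
  gaussianReal_absolutelyContinuous 0 one_ne_zero (Real.volume_singleton)

lemma gauss_Iio (t : ℝ) : (gaussianReal 0 1) (Iio t) = (gaussianReal 0 1) (Iic t) := by
  rw [← Iio_union_right, measure_union _ (measurableSet_singleton t), gauss_null_singleton,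
    add_zero]
  simp

lemma ncCDF_eq_Phi (a : ℕ) (M : ℝ) {y : ℝ} (hy : 0 < y) :
    ncCDF a M y = Phi (Real.sqrt y - M / Real.sqrt a) - Phi (-Real.sqrt y - M / Real.sqrt a) := by
  set c : ℝ := M / Real.sqrt a
  have hmeas : Measurable (fun z : ℝ => (z + c) ^ 2) := by measurability
  have hpre : (fun z : ℝ => (z + c) ^ 2) ⁻¹' (Iic y) = Icc (-Real.sqrt y - c) (Real.sqrt y - c) := by
    ext z
    simp only [mem_preimage, mem_Iic, mem_Icc]
    rw [← Real.sqrt_le_sqrt_iff hy.le, Real.sqrt_sq_eq_abs, abs_le]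
    constructor
    · rintro ⟨h1, h2⟩; exact ⟨by linarith, by linarith⟩
    · rintro ⟨h1, h2⟩; exact ⟨by linarith, by linarith⟩
  have hab : -Real.sqrt y - c ≤ Real.sqrt y - c := by
    have := Real.sqrt_nonneg y; linarith
  have hsplit : Iic (Real.sqrt y - c) =
      Iio (-Real.sqrt y - c) ∪ Icc (-Real.sqrt y - c) (Real.sqrt y - c) := by
    rw [Iio_union_Icc_eq_Iic hab]
  have hm : (gaussianReal 0 1) (Iic (Real.sqrt y - c)) =
      (gaussianReal 0 1) (Iic (-Real.sqrt y - c))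
        + (gaussianReal 0 1) (Icc (-Real.sqrt y - c) (Real.sqrt y - c)) := by
    rw [hsplit, measure_union _ measurableSet_Icc, gauss_Iio]
    rw [Set.disjoint_left]
    intro z hz1 hz2
    exact absurd hz2.1 (not_le.mpr hz1)
  rw [ncCDF, ncChiSq, Measure.map_apply hmeas measurableSet_Iic, hpre, Phi, Phi]
  have h1 : (gaussianReal 0 1) (Icc (-Real.sqrt y - c) (Real.sqrt y - c)) ≠ ⊤ := measure_ne_top _ _
  have h2 : (gaussianReal 0 1) (Iic (-Real.sqrt y - c)) ≠ ⊤ := measure_ne_top _ _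
  rw [hm, ENNReal.toReal_add h2 h1]
  ring

/-! ### Density of the noncentral chi square and its derivative -/

noncomputable def gden (c y : ℝ) : ℝ :=
  Real.exp (-(y + c^2)/2) * Real.cosh (c * Real.sqrt y) * (Real.sqrt (2*π) * Real.sqrt y)⁻¹

lemma gden_pos {c y : ℝ} (hy : 0 < y) : 0 < gden c y := by
  have h1 : 0 < Real.sqrt y := Real.sqrt_pos.mpr hy
  have h2 : 0 < Real.sqrt (2*π) := Real.sqrt_pos.mpr (by positivity)
  unfold gden
  have := Real.cosh_pos (c * Real.sqrt y)
  positivity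

lemma F_hasDeriv (c : ℝ) {y : ℝ} (hy : 0 < y) :
    HasDerivAt (fun t => Phi (Real.sqrt t - c) - Phi (-Real.sqrt t - c)) (gden c y) y := by
  have hs : 0 < Real.sqrt y := Real.sqrt_pos.mpr hy
  have hsq : Real.sqrt y ^ 2 = y := Real.sq_sqrt hy.le
  have hder : HasDerivAt Real.sqrt (1/(2*Real.sqrt y)) y := Real.hasDerivAt_sqrt hy.ne'
  have h1 : HasDerivAt (fun t => Phi (Real.sqrt t - c))
      (phi (Real.sqrt y - c) * (1/(2*Real.sqrt y))) y :=
    (Phi_hasDeriv _).comp y (hder.sub_const c)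
  have h2 : HasDerivAt (fun t => Phi (-Real.sqrt t - c))
      (phi (-Real.sqrt y - c) * (-(1/(2*Real.sqrt y)))) y :=
    (Phi_hasDeriv _).comp y ((hder.neg).sub_const c)
  have := h1.sub h2
  refine this.congr_deriv ?_
  unfold phi gden
  rw [Real.cosh_eq]
  have he1 : -(Real.sqrt y - c)^2/2 = -(y + c^2)/2 + c * Real.sqrt y := by
    linear_combination (-1/2 : ℝ) * hsq
  have he2 : -(-Real.sqrt y - c)^2/2 = -(y + c^2)/2 + -(c * Real.sqrt y) := by
    linear_combination (-1/2 : ℝ) * hsq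
  rw [he1, he2, Real.exp_add, Real.exp_add]
  have h2π : 0 < Real.sqrt (2*π) := Real.sqrt_pos.mpr (by positivity)
  field_simp
  ring

lemma gden_hasDeriv (c : ℝ) {y : ℝ} (hy : 0 < y) :
    HasDerivAt (gden c)
      (gden c y * (c * Real.sinh (c * Real.sqrt y) / (2 * Real.sqrt y * Real.cosh (c * Real.sqrt y))
        - 1/2 - 1/(2*y))) y := by
  have hs : 0 < Real.sqrt y := Real.sqrt_pos.mpr hy
  have hsder : HasDerivAt Real.sqrt (1/(2*Real.sqrt y)) y := Real.hasDerivAt_sqrt hy.ne'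
  have hA : HasDerivAt (fun t => Real.exp (-(t + c^2)/2))
      (Real.exp (-(y + c^2)/2) * (-(1/2))) y := by
    have : HasDerivAt (fun t : ℝ => -(t + c^2)/2) (-(1/2)) y := by
      have h := (((hasDerivAt_id y).add_const (c^2)).div_const 2).neg
      have : (fun t : ℝ => -(t + c^2)/2) = fun t : ℝ => -((t + c^2)/2) := by
        funext t; ring
      rw [this]
      exact h
    exact (Real.hasDerivAt_exp _).comp y this
  have hB : HasDerivAt (fun t => Real.cosh (c * Real.sqrt t))
      (Real.sinh (c * Real.sqrt y) * (c * (1/(2*Real.sqrt y)))) y := by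
    have hin : HasDerivAt (fun t => c * Real.sqrt t) (c * (1/(2*Real.sqrt y))) y :=
      hsder.const_mul c
    exact (Real.hasDerivAt_cosh _).comp y hin
  have hC : HasDerivAt (fun t => (Real.sqrt (2*π) * Real.sqrt t)⁻¹)
      (-(Real.sqrt (2*π) * (1/(2*Real.sqrt y))) / (Real.sqrt (2*π) * Real.sqrt y)^2) y := by
    have h2π : 0 < Real.sqrt (2*π) := Real.sqrt_pos.mpr (by positivity)
    exact (hsder.const_mul (Real.sqrt (2*π))).inv (by positivity)
  have := (hA.mul hB).mul hC
  refine this.congr_deriv ?_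
  simp only [Pi.mul_apply]
  unfold gden
  have h2π : 0 < Real.sqrt (2*π) := Real.sqrt_pos.mpr (by positivity)
  have hcosh := Real.cosh_pos (c * Real.sqrt y)
  set s := Real.sqrt y with hsdef
  have hy' : y = s^2 := (Real.sq_sqrt hy.le).symm
  rw [hy']
  field_simp
  ring

/-! ### Main theorem -/

/-- Identity for the second derivative of `H̃_{a,M} = G_{a,M}⁻¹ ∘ G`:
`H̃'' = B_{a,M} - (H̃')² J_{a,M}`, with
`B_{a,M}(v) = -H̃'(v) + (H̃'(v))²(1/2 + 1/(2H̃(v)))`, and `J_{a,M} ≤ M²/(2a)`. -/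
theorem tildeH_second_deriv_identity (a : ℕ) (ha : 1 ≤ a) (M : ℝ) (hM : 0 ≤ M)
    (H : ℝ → ℝ)
    (hH : ∀ v ∈ Set.Ioi (0:ℝ), 0 < H v ∧ ncCDF a M (H v) = 1 - Real.exp (-v)) :
    ∀ v ∈ Set.Ioi (0:ℝ),
      deriv (deriv H) v =
        (-(deriv H v) + (deriv H v) ^ 2 * (1 / 2 + 1 / (2 * H v)))
          - (deriv H v) ^ 2 * Jfun a M (H v) ∧
      Jfun a M (H v) ≤ M ^ 2 / (2 * a) := by
  have hapos : (0:ℝ) < a := by exact_mod_cast ha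
  set c : ℝ := M / Real.sqrt a with hc
  set F : ℝ → ℝ := fun y => Phi (Real.sqrt y - c) - Phi (-Real.sqrt y - c) with hF
  have hHpos : ∀ v ∈ Ioi (0:ℝ), 0 < H v := fun v hv => (hH v hv).1
  have hFH : ∀ v ∈ Ioi (0:ℝ), F (H v) = 1 - Real.exp (-v) := by
    intro v hv
    rw [hF]
    simp only
    rw [← ncCDF_eq_Phi a M (hHpos v hv)]
    exact (hH v hv).2
  -- strict monotonicity of H
  have hHmono : StrictMonoOn H (Ioi (0:ℝ)) := by
    intro v1 h1 v2 h2 h12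
    by_contra hle
    push_neg at hle
    have hmem1 : H v1 ∈ Ici (0:ℝ) := (hHpos v1 h1).le
    have hmem2 : H v2 ∈ Ici (0:ℝ) := (hHpos v2 h2).le
    have hFle : F (H v2) ≤ F (H v1) := (F_strictMonoOn c).monotoneOn hmem2 hmem1 hle
    rw [hFH v1 h1, hFH v2 h2] at hFle
    have : Real.exp (-v2) < Real.exp (-v1) := Real.exp_lt_exp.mpr (by linarith)
    linarith
  -- surjectivity of H onto Ioi 0
  have hSurj : ∀ y ∈ Ioi (0:ℝ), ∃ v ∈ Ioi (0:ℝ), H v = y := by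
    intro y hy
    have hy' : (0:ℝ) < y := hy
    have hF0 : F 0 = 0 := by
      rw [hF]; simp
    have hFy_pos : 0 < F y := by
      have := F_strictMonoOn c (self_mem_Ici) (le_of_lt hy' : y ∈ Ici (0:ℝ)) hy'
      rw [← hF] at this
      rw [hF0] at this; exact this
    have hFy_lt1 : F y < 1 := by
      have h1 := Phi_lt_one (Real.sqrt y - c)
      have h2 := Phi_nonneg (-Real.sqrt y - c)
      rw [hF]; simp only; linarith
    have h1F : 0 < 1 - F y := by linarith
    set v := -Real.log (1 - F y) with hvdef
    have hvpos : 0 < v := by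
      have := Real.log_neg h1F (by linarith)
      rw [hvdef]; linarith
    have hFv : F (H v) = F y := by
      rw [hFH v hvpos, hvdef, neg_neg, Real.exp_log h1F]; ring
    exact ⟨v, hvpos, (F_strictMonoOn c).injOn (hHpos v hvpos).le hy'.le hFv⟩
  have hImage : H '' (Ioi (0:ℝ)) = Ioi (0:ℝ) := by
    apply subset_antisymm
    · rintro y ⟨v, hv, rfl⟩
      exact hHpos v hv
    · intro y hy
      obtain ⟨v, hv, hvy⟩ := hSurj y hy
      exact ⟨v, hv, hvy⟩
  have hHcont : ∀ v ∈ Ioi (0:ℝ), ContinuousAt H v := by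
    intro v hv
    exact hHmono.continuousAt_of_image_mem_nhds (isOpen_Ioi.mem_nhds hv)
      (by rw [hImage]; exact isOpen_Ioi.mem_nhds (hHpos v hv))
  -- H is differentiable with derivative exp(-v)/g(H v)
  set Finv : ℝ → ℝ := fun q => H (-Real.log (1 - q)) with hFinv
  have hDeriv : ∀ v ∈ Ioi (0:ℝ), HasDerivAt H (Real.exp (-v) / gden c (H v)) v := by
    intro v hv
    have hv' : (0:ℝ) < v := hv
    have hx : 0 < H v := hHpos v hv
    have hep : 0 < Real.exp (-v) := Real.exp_pos _
    have hel : Real.exp (-v) < 1 := by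
      rw [Real.exp_lt_one_iff]; linarith
    set p : ℝ := 1 - Real.exp (-v) with hp
    have hparg : (1:ℝ) - p = Real.exp (-v) := by rw [hp]; ring
    have hFinvp : Finv p = H v := by
      rw [hFinv]; simp only
      rw [hparg, Real.log_exp, neg_neg]
    have hcontFinv : ContinuousAt Finv p := by
      have hsub : ContinuousAt (fun q : ℝ => 1 - q) p :=
        (continuous_const.sub continuous_id).continuousAt
      have hlog : ContinuousAt Real.log ((fun q : ℝ => 1 - q) p) := by
        apply Real.continuousAt_log
        simp only
        rw [hparg]; exact hep.ne'
      have hin : ContinuousAt (fun q : ℝ => -Real.log (1 - q)) p := (hlog.comp hsub).neg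
      have hval : -Real.log (1 - p) = v := by rw [hparg, Real.log_exp, neg_neg]
      have hHc : ContinuousAt H ((fun q : ℝ => -Real.log (1 - q)) p) := by
        simp only; rw [hval]; exact hHcont v hv
      have : ContinuousAt (H ∘ fun q : ℝ => -Real.log (1 - q)) p :=
        ContinuousAt.comp (g := H) (f := fun q : ℝ => -Real.log (1 - q)) hHc hin
      exact this
    have hFderiv : HasDerivAt F (gden c (H v)) (Finv p) := by
      rw [hFinvp]
      exact F_hasDeriv c hx
    have heq : ∀ᶠ q in 𝓝 p, F (Finv q) = q := by
      have hmem : Ioo (0:ℝ) 1 ∈ 𝓝 p := by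
        apply isOpen_Ioo.mem_nhds
        constructor
        · rw [hp]; linarith
        · rw [hp]; linarith
      filter_upwards [hmem] with q hq
      have hq1 : 0 < 1 - q := by linarith [hq.2]
      have hlq : (0:ℝ) < -Real.log (1 - q) := by
        have := Real.log_neg hq1 (by linarith [hq.1])
        linarith
      show F (H (-Real.log (1 - q))) = q
      rw [hFH _ hlq, neg_neg, Real.exp_log hq1]; ring
    have hinv : HasDerivAt Finv (gden c (H v))⁻¹ p :=
      HasDerivAt.of_local_left_inverse hcontFinv hFderiv (ne_of_gt (gden_pos hx)) heq
    have hE : HasDerivAt (fun w : ℝ => 1 - Real.exp (-w)) (Real.exp (-v)) v := by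
      have h0 : HasDerivAt (fun w : ℝ => Real.exp (-w)) (-Real.exp (-v)) v := by
        exact ((Real.hasDerivAt_exp (-v)).comp v (hasDerivAt_neg v)).congr_deriv (by simp)
      simpa using h0.const_sub 1
    have hcomp := hinv.comp v hE
    have hev : (fun w => Finv (1 - Real.exp (-w))) =ᶠ[𝓝 v] H := by
      filter_upwards [isOpen_Ioi.mem_nhds hv] with w hw
      show H (-Real.log (1 - (1 - Real.exp (-w)))) = H w
      rw [show (1:ℝ) - (1 - Real.exp (-w)) = Real.exp (-w) by ring, Real.log_exp, neg_neg]
    have hfinal := (hcomp.congr_of_eventuallyEq hev.symm)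
    refine hfinal.congr_deriv ?_
    rw [div_eq_mul_inv, mul_comm]
  -- first derivative formula
  have hderivH : ∀ v ∈ Ioi (0:ℝ), deriv H v = Real.exp (-v) / gden c (H v) :=
    fun v hv => (hDeriv v hv).deriv
  -- main conclusion
  intro v hv
  have hv' : (0:ℝ) < v := hv
  have hx : 0 < H v := hHpos v hv
  have hsx : 0 < Real.sqrt (H v) := Real.sqrt_pos.mpr hx
  have hg : 0 < gden c (H v) := gden_pos hx
  have hcosh : 0 < Real.cosh (c * Real.sqrt (H v)) := Real.cosh_pos _
  have hep : 0 < Real.exp (-v) := Real.exp_pos _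
  constructor
  · -- second derivative identity
    have hev2 : deriv H =ᶠ[𝓝 v] (fun w => Real.exp (-w) * (gden c (H w))⁻¹) := by
      filter_upwards [isOpen_Ioi.mem_nhds hv] with w hw
      rw [hderivH w hw, div_eq_mul_inv]
    have hd2 : deriv (deriv H) v = deriv (fun w => Real.exp (-w) * (gden c (H w))⁻¹) v :=
      hev2.deriv_eq
    -- compute the derivative of the RHS
    set J : ℝ := c * Real.sinh (c * Real.sqrt (H v))
        / (2 * Real.sqrt (H v) * Real.cosh (c * Real.sqrt (H v))) with hJ
    have hgH : HasDerivAt (fun w => gden c (H w))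
        (gden c (H v) * (J - 1/2 - 1/(2 * H v)) * (Real.exp (-v) / gden c (H v))) v :=
      (gden_hasDeriv c hx).comp v (hDeriv v hv)
    have hginv : HasDerivAt (fun w => (gden c (H w))⁻¹)
        (-(gden c (H v) * (J - 1/2 - 1/(2 * H v)) * (Real.exp (-v) / gden c (H v)))
          / (gden c (H v))^2) v :=
      hgH.inv hg.ne'
    have hexp : HasDerivAt (fun w : ℝ => Real.exp (-w)) (-Real.exp (-v)) v := by
      exact ((Real.hasDerivAt_exp (-v)).comp v (hasDerivAt_neg v)).congr_deriv (by simp)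
    have hprod := hexp.mul hginv
    rw [hd2, HasDerivAt.deriv (f := fun w => Real.exp (-w) * (gden c (H w))⁻¹) hprod]
    rw [hderivH v hv, Jfun_eq ha hM hx, ← hc, ← hJ]
    field_simp
    ring
  · exact Jfun_le ha hM hx
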